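/- arXiv:1206.6354 — 2 statements merged into one kernel-verified Lean document; each statement's English description precedes it below -/
import Mathlib

section
/- For every integer m ≥ 0 and every integer ℓ ≥ 1, r_{m,ℓ} = ∑_{k=0}^{m} C(m+1, k+1) · s_{k,ℓ}, where C(m+1,k+1) is the binomial coefficient. -/
/-- `IsBPA m ℓ f` : `f` encodes a barred preferential arrangement of `[ℓ]` with `m` bars.
Each element of `[ℓ]` is assigned a section (one of the `m + 1` sections determined by the
`m` bars) together with a rank inside its section (ties are allowed: elements of the same
section with the same rank form a block); within each section the set of ranks actually used
must be an initial segment `{0, …, t-1}`, so that `f` determines, for each section, an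
ordered partition of the elements assigned to it into nonempty blocks. -/
def IsBPA (m ℓ : ℕ) (f : Fin ℓ → Fin (m + 1) × Fin ℓ) : Prop :=
  ∀ x : Fin ℓ, ∀ r : Fin ℓ, r < (f x).2 → ∃ y : Fin ℓ, (f y).1 = (f x).1 ∧ (f y).2 = r

instance (m ℓ : ℕ) : DecidablePred (IsBPA m ℓ) := fun f => by unfold IsBPA; infer_instance

/-- `bpa m ℓ` : the number of barred preferential arrangements of `[ℓ]` with `m` bars.
In particular `bpa 0 ℓ` is the number of preferential arrangements of `[ℓ]`
(the Fubini / ordered Bell number `r_ℓ`). -/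
def bpa (m ℓ : ℕ) : ℕ :=
  Fintype.card { f : Fin ℓ → Fin (m + 1) × Fin ℓ // IsBPA m ℓ f }

/-- `IsSBPA m ℓ f` : `f` encodes a *special* barred preferential arrangement, i.e. a barred
preferential arrangement in which every section is nonempty. -/
def IsSBPA (m ℓ : ℕ) (f : Fin ℓ → Fin (m + 1) × Fin ℓ) : Prop :=
  IsBPA m ℓ f ∧ ∀ j : Fin (m + 1), ∃ x : Fin ℓ, (f x).1 = j

instance (m ℓ : ℕ) : DecidablePred (IsSBPA m ℓ) := fun f => by unfold IsSBPA; infer_instance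

/-- `sbpa m ℓ` : the number of special barred preferential arrangements of `[ℓ]` with `m` bars. -/
def sbpa (m ℓ : ℕ) : ℕ :=
  Fintype.card { f : Fin ℓ → Fin (m + 1) × Fin ℓ // IsSBPA m ℓ f }

def secSet {m ℓ : ℕ} (f : Fin ℓ → Fin (m + 1) × Fin ℓ) : Finset (Fin (m + 1)) :=
  Finset.image (fun x => (f x).1) Finset.univ

def fiberEquiv (m ℓ k : ℕ) (S : Finset (Fin (m + 1))) (h : S.card = k + 1) :
    { f : Fin ℓ → Fin (m + 1) × Fin ℓ // IsBPA m ℓ f ∧ secSet f = S } ≃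
    { g : Fin ℓ → Fin (k + 1) × Fin ℓ // IsSBPA k ℓ g } where
  toFun := fun ⟨f, hf, hS⟩ =>
    ⟨fun x => ((S.orderIsoOfFin h).symm ⟨(f x).1, by
        rw [← hS]; exact Finset.mem_image.mpr ⟨x, Finset.mem_univ x, rfl⟩⟩, (f x).2), by
      constructor
      · intro x r hr
        obtain ⟨y, hy1, hy2⟩ := hf x r hr
        exact ⟨y, by simp [hy1], hy2⟩
      · intro j
        have : ((S.orderIsoOfFin h j : Fin (m + 1))) ∈ secSet f := by
          rw [hS]; exact (S.orderIsoOfFin h j).2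
        obtain ⟨x, _, hx⟩ := Finset.mem_image.mp this
        refine ⟨x, ?_⟩
        simp only [hx]
        exact (S.orderIsoOfFin h).symm_apply_apply j⟩
  invFun := fun ⟨g, hg, hsurj⟩ =>
    ⟨fun x => ((S.orderIsoOfFin h (g x).1 : Fin (m + 1)), (g x).2), by
      constructor
      · intro x r hr
        obtain ⟨y, hy1, hy2⟩ := hg x r hr
        exact ⟨y, by simp [hy1], hy2⟩
      · apply Finset.Subset.antisymm
        · intro s hs
          obtain ⟨x, _, hx⟩ := Finset.mem_image.mp hs
          rw [← hx]; exact (S.orderIsoOfFin h (g x).1).2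
        · intro s hs
          obtain ⟨x, hx⟩ := hsurj ((S.orderIsoOfFin h).symm ⟨s, hs⟩)
          refine Finset.mem_image.mpr ⟨x, Finset.mem_univ x, by show ((S.orderIsoOfFin h) (g x).1 : Fin (m+1)) = s; rw [hx]; simp⟩⟩
  left_inv := fun ⟨f, hf, hS⟩ => by
    ext x
    · simp
    · rfl
  right_inv := fun ⟨g, hg, hsurj⟩ => by
    ext x
    · exact congrArg Fin.val ((S.orderIsoOfFin h).symm_apply_apply (g x).1)
    · rfl

lemma fiber_card_eq (m ℓ k : ℕ) (S : Finset (Fin (m + 1))) (h : S.card = k + 1) :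
    (Finset.univ.filter (fun f : Fin ℓ → Fin (m + 1) × Fin ℓ =>
      IsBPA m ℓ f ∧ secSet f = S)).card = sbpa k ℓ := by
  rw [← Fintype.card_subtype, sbpa]
  exact Fintype.card_congr (fiberEquiv m ℓ k S h)

lemma secSet_ne_empty (m ℓ : ℕ) (hℓ : 1 ≤ ℓ) (f : Fin ℓ → Fin (m + 1) × Fin ℓ) :
    secSet f ≠ (∅ : Finset (Fin (m + 1))) := by
  intro h
  have : (f ⟨0, hℓ⟩).1 ∈ secSet f := Finset.mem_image.mpr ⟨_, Finset.mem_univ _, rfl⟩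
  rw [h] at this
  exact absurd this (Finset.notMem_empty _)

/-- For every `m ≥ 0` and `ℓ ≥ 1`,
`r_{m,ℓ} = ∑_{k=0}^{m} C(m+1, k+1) · s_{k,ℓ}`. -/
theorem bpa_eq_sum_sbpa (m ℓ : ℕ) (hℓ : 1 ≤ ℓ) :
    bpa m ℓ = ∑ k ∈ Finset.range (m + 1), Nat.choose (m + 1) (k + 1) * sbpa k ℓ := by
  classical
  rw [bpa, Fintype.card_subtype,
    Finset.card_eq_sum_card_fiberwise (f := fun f => secSet f)
      (t := (Finset.univ : Finset (Finset (Fin (m + 1))))) (fun x _ => Finset.mem_univ _)]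
  simp only [Finset.filter_filter]
  rw [← Finset.sum_fiberwise_of_maps_to (g := fun S : Finset (Fin (m + 1)) => S.card)
      (t := Finset.range (m + 2)) (fun S _ => Finset.mem_range.mpr
        (Nat.lt_succ_of_le ((Finset.card_le_univ S).trans_eq (Finset.card_fin _))))]
  rw [Finset.sum_range_succ']
  have h0 : (∑ S ∈ Finset.univ.filter (fun S : Finset (Fin (m + 1)) => S.card = 0),
      (Finset.univ.filter (fun f : Fin ℓ → Fin (m + 1) × Fin ℓ =>
        IsBPA m ℓ f ∧ secSet f = S)).card) = 0 := by
    apply Finset.sum_eq_zero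
    intro S hS
    have hSe : S = ∅ := Finset.card_eq_zero.mp (Finset.mem_filter.mp hS).2
    subst hSe
    rw [Finset.card_eq_zero]
    exact Finset.filter_eq_empty_iff.mpr (fun f _ hc => secSet_ne_empty m ℓ hℓ f hc.2)
  rw [h0, add_zero]
  apply Finset.sum_congr rfl
  intro k _
  rw [Finset.sum_congr rfl (fun S hS =>
    fiber_card_eq m ℓ k S (Finset.mem_filter.mp hS).2)]
  rw [Finset.sum_const, smul_eq_mul]
  congr 1
  have : Finset.univ.filter (fun S : Finset (Fin (m + 1)) => S.card = k + 1)
      = Finset.powersetCard (k + 1) Finset.univ := by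
    rw [Finset.powersetCard_eq_filter, Finset.powerset_univ]
  rw [this, Finset.card_powersetCard, Finset.card_fin]
end

section
/- For every integer ℓ ≥ 1, the series ∑_{k ≥ 0} k^ℓ / 2^k converges and r_ℓ = (1/2) · ∑_{k ≥ 0} k^ℓ / 2^k. -/
open Finset

/-- Number of surjections from `Fin ℓ` onto `Fin j`. -/
def surjCard (ℓ j : ℕ) : ℕ :=
  Fintype.card { g : Fin ℓ → Fin j // Function.Surjective g }

lemma surjCard_eq_zero {ℓ j : ℕ} (h : ℓ < j) : surjCard ℓ j = 0 := by
  rw [surjCard, Fintype.card_eq_zero_iff]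
  refine ⟨fun g => absurd (Fintype.card_le_of_surjective g.1 g.2) ?_⟩
  simpa using h

/-- Functions with image exactly `s` are equinumerous with surjections onto `Fin s.card`. -/
noncomputable def imageEquiv (ℓ : ℕ) {β : Type*} [Fintype β] [DecidableEq β] (s : Finset β) :
    { f : Fin ℓ → β // Finset.image f Finset.univ = s } ≃
      { g : Fin ℓ → Fin s.card // Function.Surjective g } where
  toFun := fun ⟨f, hf⟩ => ⟨fun x => s.equivFin ⟨f x, by
      rw [← hf]; exact Finset.mem_image_of_mem _ (Finset.mem_univ x)⟩,
    by
      intro i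
      have ht : (s.equivFin.symm i : β) ∈ Finset.image f Finset.univ := by
        rw [hf]; exact (s.equivFin.symm i).2
      obtain ⟨x, -, hx⟩ := Finset.mem_image.1 ht
      exact ⟨x, (Equiv.apply_eq_iff_eq_symm_apply _).2 (Subtype.ext hx)⟩⟩
  invFun := fun ⟨g, hg⟩ => ⟨fun x => (s.equivFin.symm (g x) : β), by
    apply Finset.Subset.antisymm
    · intro t ht
      obtain ⟨x, -, hx⟩ := Finset.mem_image.1 ht
      exact hx ▸ (s.equivFin.symm (g x)).2
    · intro t ht
      obtain ⟨x, hx⟩ := hg (s.equivFin ⟨t, ht⟩)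
      have h2 : s.equivFin.symm (g x) = ⟨t, ht⟩ := by rw [hx, Equiv.symm_apply_apply]
      exact Finset.mem_image.2 ⟨x, Finset.mem_univ x, by rw [h2]⟩⟩
  left_inv := fun ⟨f, hf⟩ => Subtype.ext (funext fun x => by simp)
  right_inv := fun ⟨g, hg⟩ => Subtype.ext (funext fun x =>
    (Equiv.apply_eq_iff_eq_symm_apply _).2 (Subtype.ext rfl))

lemma card_image_fiber (ℓ : ℕ) {β : Type*} [Fintype β] [DecidableEq β] (s : Finset β) :
    Fintype.card { f : Fin ℓ → β // Finset.image f Finset.univ = s } = surjCard ℓ s.card :=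
  Fintype.card_congr (imageEquiv ℓ s)

lemma pow_eq_sum_surjCard (ℓ k : ℕ) :
    k ^ ℓ = ∑ j ∈ range (k + 1), k.choose j * surjCard ℓ j := by
  have h0 : k ^ ℓ = Fintype.card (Fin ℓ → Fin k) := by simp
  rw [h0, ← Finset.card_univ,
    Finset.card_eq_sum_card_fiberwise
      (f := fun g : Fin ℓ → Fin k => Finset.image g Finset.univ)
      (t := Finset.univ) (fun x _ => Finset.mem_univ _)]
  have h1 : ∀ s : Finset (Fin k),
      (Finset.univ.filter fun g : Fin ℓ → Fin k => Finset.image g Finset.univ = s).card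
        = surjCard ℓ s.card := by
    intro s
    rw [← Fintype.card_subtype, card_image_fiber]
  calc ∑ s : Finset (Fin k),
        (Finset.univ.filter fun g : Fin ℓ → Fin k => Finset.image g Finset.univ = s).card
      = ∑ s : Finset (Fin k), surjCard ℓ s.card := by
        exact Finset.sum_congr rfl fun s _ => h1 s
    _ = ∑ j ∈ range (k + 1), ∑ s ∈ Finset.univ.filter
          (fun s : Finset (Fin k) => s.card = j), surjCard ℓ s.card := by
        rw [Finset.sum_fiberwise_of_maps_to (fun s _ => Finset.mem_range.2
          (Nat.lt_succ_of_le (by simpa using Finset.card_le_card (Finset.subset_univ s))))]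
    _ = ∑ j ∈ range (k + 1), k.choose j * surjCard ℓ j := by
        refine Finset.sum_congr rfl fun j _ => ?_
        rw [Finset.sum_congr rfl (fun s hs => by
          rw [(Finset.mem_filter.1 hs).2]), Finset.sum_const, smul_eq_mul]
        congr 1
        rw [← Fintype.card_subtype]
        simpa using Fintype.card_finset_len (α := Fin k) j

lemma pow_eq_sum_surjCard' (ℓ k : ℕ) :
    k ^ ℓ = ∑ j ∈ range (ℓ + 1), k.choose j * surjCard ℓ j := by
  rw [pow_eq_sum_surjCard ℓ k]
  rw [Finset.sum_subset (Finset.range_subset_range.2 (Nat.succ_le_succ (le_max_left k ℓ))),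
    Finset.sum_subset (s₁ := range (ℓ+1)) (Finset.range_subset_range.2
      (Nat.succ_le_succ (le_max_right k ℓ)))]
  · intro j _ hj
    rw [Finset.mem_range, not_lt] at hj
    rw [surjCard_eq_zero (by omega), mul_zero]
  · intro j _ hj
    rw [Finset.mem_range, not_lt] at hj
    rw [Nat.choose_eq_zero_of_lt (by omega), zero_mul]

/-- A downward-closed subset of `Fin n` is an initial segment. -/
lemma dc_eq_seg {n : ℕ} (T : Finset (Fin n))
    (h : ∀ r t : Fin n, r < t → t ∈ T → r ∈ T) :
    T = Finset.univ.filter fun r : Fin n => (r : ℕ) < T.card := by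
  ext r
  simp only [Finset.mem_filter, Finset.mem_univ, true_and]
  constructor
  · intro hr
    have hsub : Finset.Iic r ⊆ T := by
      intro r' hr'
      rcases lt_or_eq_of_le (Finset.mem_Iic.1 hr') with h' | h'
      · exact h r' r h' hr
      · exact h' ▸ hr
    have := Finset.card_le_card hsub
    rw [Fin.card_Iic] at this
    omega
  · intro hr
    by_contra hmem
    have hsub : T ⊆ Finset.Iio r := by
      intro t ht
      rw [Finset.mem_Iio]
      rcases lt_trichotomy t r with h' | h' | h'
      · exact h'
      · exact absurd (h' ▸ ht) hmem
      · exact absurd (h r t h' ht) hmem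
    have := Finset.card_le_card hsub
    rw [Fin.card_Iio] at this
    omega

lemma card_seg {n j : ℕ} (h : j ≤ n) :
    (Finset.univ.filter fun r : Fin n => (r : ℕ) < j).card = j := by
  rw [← Fintype.card_subtype]
  have e : { r : Fin n // (r : ℕ) < j } ≃ Fin j :=
    ⟨fun r => ⟨r.1.1, r.2⟩, fun i => ⟨⟨i.1, lt_of_lt_of_le i.2 h⟩, i.2⟩,
      fun r => rfl, fun i => rfl⟩
  rw [Fintype.card_congr e, Fintype.card_fin]

/-- BPAs with zero bars correspond to maps `Fin ℓ → Fin ℓ` with downward-closed range. -/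
def bpaEquiv (ℓ : ℕ) :
    { f : Fin ℓ → Fin 1 × Fin ℓ // IsBPA 0 ℓ f } ≃
      { g : Fin ℓ → Fin ℓ // ∀ x r : Fin ℓ, r < g x → ∃ y, g y = r } where
  toFun := fun ⟨f, hf⟩ => ⟨fun x => (f x).2,
    fun x r hr => (hf x r hr).imp fun y hy => hy.2⟩
  invFun := fun ⟨g, hg⟩ => ⟨fun x => (0, g x),
    fun x r hr => (hg x r hr).imp fun y hy => ⟨rfl, hy⟩⟩
  left_inv := fun ⟨f, hf⟩ => Subtype.ext (funext fun x => by
    have h1 : (f x).1 = 0 := Fin.ext (Nat.lt_one_iff.mp (f x).1.2)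
    rw [Prod.ext_iff]
    exact ⟨h1.symm, rfl⟩)
  right_inv := fun ⟨g, hg⟩ => rfl

lemma bpa_zero_eq_sum (ℓ : ℕ) :
    bpa 0 ℓ = ∑ j ∈ range (ℓ + 1), surjCard ℓ j := by
  classical
  have P : (Fin ℓ → Fin ℓ) → Prop := fun _ => True
  rw [bpa, Fintype.card_congr (bpaEquiv ℓ), Fintype.card_subtype]
  rw [Finset.card_eq_sum_card_fiberwise
    (f := fun g : Fin ℓ → Fin ℓ => (Finset.image g Finset.univ).card)
    (t := range (ℓ + 1)) (fun g _ => Finset.mem_range.2 (Nat.lt_succ_of_le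
      (by simpa using Finset.card_le_card (Finset.subset_univ (Finset.image g Finset.univ)))))]
  refine Finset.sum_congr rfl fun j hj => ?_
  have hjl : j ≤ ℓ := Nat.lt_succ_iff.1 (Finset.mem_range.1 hj)
  rw [Finset.filter_filter]
  have hset : (Finset.univ.filter fun g : Fin ℓ → Fin ℓ =>
        (∀ x r : Fin ℓ, r < g x → ∃ y, g y = r) ∧ (Finset.image g Finset.univ).card = j)
      = Finset.univ.filter fun g : Fin ℓ → Fin ℓ =>
        Finset.image g Finset.univ = Finset.univ.filter fun r : Fin ℓ => (r : ℕ) < j := by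
    ext g
    simp only [Finset.mem_filter, Finset.mem_univ, true_and]
    constructor
    · rintro ⟨hP, hcard⟩
      have hdc : ∀ r t : Fin ℓ, r < t → t ∈ Finset.image g Finset.univ →
          r ∈ Finset.image g Finset.univ := by
        intro r t hrt ht
        obtain ⟨x, -, hx⟩ := Finset.mem_image.1 ht
        obtain ⟨y, hy⟩ := hP x r (hx ▸ hrt)
        exact Finset.mem_image.2 ⟨y, Finset.mem_univ y, hy⟩
      rw [dc_eq_seg _ hdc, hcard]
    · intro him
      constructor
      · intro x r hr
        have hx : g x ∈ Finset.image g Finset.univ :=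
          Finset.mem_image_of_mem _ (Finset.mem_univ x)
        rw [him, Finset.mem_filter] at hx
        have hrm : r ∈ Finset.image g Finset.univ := by
          rw [him, Finset.mem_filter]
          exact ⟨Finset.mem_univ r, lt_of_lt_of_le (Fin.lt_iff_val_lt_val.1 hr) (le_of_lt hx.2)⟩
        obtain ⟨y, -, hy⟩ := Finset.mem_image.1 hrm
        exact ⟨y, hy⟩
      · rw [him, card_seg hjl]
  rw [hset, ← Fintype.card_subtype, card_image_fiber, card_seg hjl]


lemma summable_choose_div (j : ℕ) : Summable fun k : ℕ => (k.choose j : ℝ) / 2 ^ k := by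
  have hs : Summable fun k : ℕ => (k : ℝ) ^ j * (1 / 2 : ℝ) ^ k :=
    summable_pow_mul_geometric_of_norm_lt_one j (by rw [Real.norm_eq_abs, abs_of_nonneg (by norm_num : (0:ℝ) ≤ 1/2)]; norm_num)
  refine Summable.of_nonneg_of_le (fun k => by positivity) (fun k => ?_) hs
  have h1 : (k.choose j : ℝ) ≤ (k : ℝ) ^ j := by exact_mod_cast Nat.choose_le_pow k j
  calc (k.choose j : ℝ) / 2 ^ k ≤ (k : ℝ) ^ j / 2 ^ k := by gcongr
    _ = (k : ℝ) ^ j * (1 / 2) ^ k := by rw [div_pow, one_pow]; ring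

lemma tsum_choose_div (j : ℕ) : ∑' k : ℕ, (k.choose j : ℝ) / 2 ^ k = 2 := by
  induction j with
  | zero =>
    simp only [Nat.choose_zero_right, Nat.cast_one]
    have h : ∀ k : ℕ, (1 : ℝ) / 2 ^ k = (1 / 2 : ℝ) ^ k := fun k => by
      rw [div_pow, one_pow]
    rw [tsum_congr h, tsum_geometric_of_lt_one (by norm_num) (by norm_num)]
    norm_num
  | succ j ih =>
    have hS := summable_choose_div (j + 1)
    have hS' := summable_choose_div j
    have h0 := Summable.tsum_eq_zero_add hS
    have hre : ∀ b : ℕ, ((b + 1).choose (j + 1) : ℝ) / 2 ^ (b + 1)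
        = (1 / 2) * ((b.choose j : ℝ) / 2 ^ b)
          + (1 / 2) * ((b.choose (j + 1) : ℝ) / 2 ^ b) := by
      intro b
      rw [Nat.choose_succ_succ]
      push_cast
      rw [pow_succ]
      ring
    rw [tsum_congr hre, Summable.tsum_add (hS'.mul_left _) (hS.mul_left _),
      tsum_mul_left, tsum_mul_left, ih] at h0
    simp only [Nat.choose_zero_succ, Nat.cast_zero, pow_zero, zero_div] at h0
    linarith

/-- For every `ℓ ≥ 1`, the series `∑_{k ≥ 0} k^ℓ / 2^k` converges and
`r_ℓ = (1/2) · ∑_{k ≥ 0} k^ℓ / 2^k`. -/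
theorem pa_eq_infinite_series (ℓ : ℕ) (hℓ : 1 ≤ ℓ) :
    Summable (fun k : ℕ => (k : ℝ) ^ ℓ / 2 ^ k) ∧
      (bpa 0 ℓ : ℝ) = (1 / 2) * ∑' k : ℕ, (k : ℝ) ^ ℓ / 2 ^ k := by
  have hsum : Summable (fun k : ℕ => (k : ℝ) ^ ℓ / 2 ^ k) := by
    have hs : Summable fun k : ℕ => (k : ℝ) ^ ℓ * (1 / 2 : ℝ) ^ k :=
      summable_pow_mul_geometric_of_norm_lt_one ℓ (by rw [Real.norm_eq_abs, abs_of_nonneg (by norm_num : (0:ℝ) ≤ 1/2)]; norm_num)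
    exact hs.congr fun k => by rw [div_pow, one_pow]; ring
  refine ⟨hsum, ?_⟩
  have hpt : ∀ k : ℕ, (k : ℝ) ^ ℓ / 2 ^ k
      = ∑ j ∈ range (ℓ + 1), (surjCard ℓ j : ℝ) * ((k.choose j : ℝ) / 2 ^ k) := by
    intro k
    have hr : ((k : ℝ)) ^ ℓ = ∑ j ∈ range (ℓ + 1), (k.choose j : ℝ) * (surjCard ℓ j : ℝ) := by
      exact_mod_cast pow_eq_sum_surjCard' ℓ k
    rw [hr, Finset.sum_div]
    exact Finset.sum_congr rfl fun j _ => by ring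
  have htsum : ∑' k : ℕ, (k : ℝ) ^ ℓ / 2 ^ k
      = ∑ j ∈ range (ℓ + 1), (surjCard ℓ j : ℝ) * 2 := by
    rw [tsum_congr hpt, Summable.tsum_finsetSum (fun j _ => (summable_choose_div j).mul_left _)]
    exact Finset.sum_congr rfl fun j _ => by rw [tsum_mul_left, tsum_choose_div]
  rw [htsum, bpa_zero_eq_sum, ← Finset.sum_mul]
  push_cast
  ring
end
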